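/- For every ℓ ≥ 2, the number of isomorphism classes of downsets of size 3ℓ of the poset H_ℓ satisfies d_{3ℓ}(H_ℓ) = ℓ + 2. -/

import Mathlib

/-!
Formalization framework: finite posets are bundled as `FinPartOrd.{0}`, downsets are
`Finset`s of elements, unlabelled posets are isomorphism classes (`UPoset`), and a witness
of a set `Γ` of unlabelled posets at size `n` is a finite poset whose set of size-`n`
downsets, up to isomorphism, is exactly `Γ`.
-/

attribute [local instance] Classical.propDecidable

noncomputable section

open Finset

/-- `D` is a downset of the finite poset `Q`. -/
def IsDownset (Q : FinPartOrd.{0}) (D : Finset ↥Q) : Prop :=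
  ∀ ⦃a b : ↥Q⦄, a ∈ D → b ≤ a → b ∈ D

/-- The induced subposet of `Q` on a finset `D` of its elements. -/
def subposet (Q : FinPartOrd.{0}) (D : Finset ↥Q) : FinPartOrd.{0} :=
  FinPartOrd.of {x : ↥Q // x ∈ D}

/-- The isomorphism setoid on finite posets. -/
def isoSetoid : Setoid FinPartOrd.{0} where
  r P Q := Nonempty (↥P ≃o ↥Q)
  iseqv := ⟨fun _ => ⟨OrderIso.refl _⟩, fun ⟨e⟩ => ⟨e.symm⟩, fun ⟨e⟩ ⟨f⟩ => ⟨e.trans f⟩⟩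

/-- Unlabelled finite posets: isomorphism classes of finite posets. -/
def UPoset := Quotient isoSetoid

/-- The isomorphism class of a finite poset. -/
def cls (P : FinPartOrd.{0}) : UPoset := Quotient.mk isoSetoid P

/-- The number of elements of a finite poset. -/
def size (Q : FinPartOrd.{0}) : ℕ := Fintype.card ↥Q

/-- The size of an isomorphism class of finite posets. -/
def usize : UPoset → ℕ :=
  Quotient.lift size fun _ _ h => h.elim fun e => Fintype.card_congr e.toEquiv

/-- `D_n(Q)` : the set of downsets of `Q` of size `n`, up to isomorphism. -/
def DSet (n : ℕ) (Q : FinPartOrd.{0}) : Set UPoset :=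
  {c | ∃ D : Finset ↥Q, IsDownset Q D ∧ D.card = n ∧ cls (subposet Q D) = c}

/-- `d_n(Q)` : the number of isomorphism classes of downsets of `Q` of size `n`. -/
def dNum (n : ℕ) (Q : FinPartOrd.{0}) : ℕ := (DSet n Q).ncard

/-- `D(Q)` : the set of nonempty downsets of `Q`, up to isomorphism. -/
def DAllSet (Q : FinPartOrd.{0}) : Set UPoset :=
  {c | ∃ D : Finset ↥Q, IsDownset Q D ∧ D.Nonempty ∧ cls (subposet Q D) = c}

/-- `Q` is a witness of the set `Γ` of unlabelled posets (at size `n`): the set of size-`n`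
downsets of `Q`, up to isomorphism, is exactly `Γ`. -/
def IsWitness (n : ℕ) (Γ : Set UPoset) (Q : FinPartOrd.{0}) : Prop := DSet n Q = Γ

/-- `Q` is a minimal witness of `Γ` : `Q` is a witness and no proper downset of `Q` is
itself a witness of `Γ`. -/
def IsMinimalWitness (n : ℕ) (Γ : Set UPoset) (Q : FinPartOrd.{0}) : Prop :=
  IsWitness n Γ Q ∧
    ∀ D : Finset ↥Q, IsDownset Q D → D ≠ Finset.univ → ¬IsWitness n Γ (subposet Q D)

/-- The height of an element: the number of elements of a longest chain whose maximum is `x`. -/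
def heightEl (Q : FinPartOrd.{0}) (x : ↥Q) : ℕ :=
  sSup {k | ∃ c : Finset ↥Q, IsChain (· ≤ ·) (c : Set ↥Q) ∧ x ∈ c ∧ (∀ y ∈ c, y ≤ x) ∧ c.card = k}

/-- The height of a finite poset: the number of elements of a longest chain. -/
def posetHeight (Q : FinPartOrd.{0}) : ℕ :=
  sSup {k | ∃ c : Finset ↥Q, IsChain (· ≤ ·) (c : Set ↥Q) ∧ c.card = k}

/-- A finite poset is Newtonian if every element of level `i` covers every element of
level `i - 1`. -/
def Newtonian (Q : FinPartOrd.{0}) : Prop :=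
  ∀ x y : ↥Q, heightEl Q y = heightEl Q x + 1 → x ⋖ y

/-- A finite poset is connected if it is nonempty and any two elements are joined by a
comparability path. -/
def ConnectedPoset (Q : FinPartOrd.{0}) : Prop :=
  Nonempty ↥Q ∧ ∀ x y : ↥Q, Relation.ReflTransGen (fun a b : ↥Q => a ≤ b ∨ b ≤ a) x y

/-- `x` is a maximal element of the subset `W` of `Q`. -/
def IsMaxIn (Q : FinPartOrd.{0}) (W : Finset ↥Q) (x : ↥Q) : Prop :=
  x ∈ W ∧ ∀ y ∈ W, x ≤ y → y = x

/-- `x` is a maximal element of the finite poset `R`. -/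
def IsMaxEl (R : FinPartOrd.{0}) (x : ↥R) : Prop := ∀ y, x ≤ y → y = x

/-- A poset of type 𝒲 : the disjoint union of two connected Newtonian posets that are not
isomorphic, but which only differ in one maximal element (they become isomorphic after the
removal of a suitable maximal element from each). -/
def TypeW (P : FinPartOrd.{0}) : Prop :=
  ∃ W₁ W₂ : Finset ↥P,
    W₁ ∪ W₂ = Finset.univ ∧ Disjoint W₁ W₂ ∧
    (∀ x ∈ W₁, ∀ y ∈ W₂, ¬x ≤ y ∧ ¬y ≤ x) ∧
    ConnectedPoset (subposet P W₁) ∧ ConnectedPoset (subposet P W₂) ∧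
    Newtonian (subposet P W₁) ∧ Newtonian (subposet P W₂) ∧
    ¬Nonempty (↥(subposet P W₁) ≃o ↥(subposet P W₂)) ∧
    ∃ x y, IsMaxIn P W₁ x ∧ IsMaxIn P W₂ y ∧
      Nonempty (↥(subposet P (W₁.erase x)) ≃o ↥(subposet P (W₂.erase y)))

/-- An antichain on `i` elements. -/
def AntichainFin (i : ℕ) : Type := Fin i

instance (i : ℕ) : PartialOrder (AntichainFin i) where
  le x y := x = y
  le_refl _ := rfl
  le_trans a b c h₁ h₂ := show a = c from (show a = b from h₁).trans (show b = c from h₂)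
  le_antisymm _ _ h _ := h

instance (i : ℕ) : Fintype (AntichainFin i) := inferInstanceAs (Fintype (Fin i))
instance (i : ℕ) : Fintype (WithTop (AntichainFin i)) :=
  inferInstanceAs (Fintype (Option (Fin i)))

/-- `Λ_i`: the poset with `i` minimal elements and one maximal element above all of them. -/
def Lambda (i : ℕ) : FinPartOrd.{0} := FinPartOrd.of (WithTop (AntichainFin i))

/-- `k` disjoint copies of a poset `α`. -/
def Copies (k : ℕ) (α : Type) : Type := Fin k × α

instance (k : ℕ) (α : Type) [PartialOrder α] : PartialOrder (Copies k α) where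
  le x y := x.1 = y.1 ∧ x.2 ≤ y.2
  le_refl _ := ⟨rfl, le_refl _⟩
  le_trans _ _ _ h₁ h₂ := ⟨h₁.1.trans h₂.1, le_trans h₁.2 h₂.2⟩
  le_antisymm x y h₁ h₂ := by
    obtain ⟨x₁, x₂⟩ := x
    obtain ⟨y₁, y₂⟩ := y
    obtain ⟨h, h'⟩ := h₁
    cases h
    exact congrArg _ (le_antisymm h' h₂.2)

instance (k : ℕ) (α : Type) [Fintype α] : Fintype (Copies k α) :=
  inferInstanceAs (Fintype (Fin k × α))

/-- `H_ℓ`: the poset whose connected components are `ℓ` copies of `Λ₂` and one copy of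
`Λ_{3(ℓ-1)}`. -/
def Hposet (ℓ : ℕ) : FinPartOrd.{0} :=
  FinPartOrd.of (Copies ℓ (WithTop (AntichainFin 2)) ⊕ WithTop (AntichainFin (3 * (ℓ - 1))))

/-- The poset `P₀` placed above a chain of `i` elements. -/
def withChain (P₀ : FinPartOrd.{0}) (i : ℕ) : FinPartOrd.{0} :=
  FinPartOrd.of (Fin i ⊕ₗ ↥P₀)

/-- The disjoint union of two finite posets. -/
def disjSum (P R : FinPartOrd.{0}) : FinPartOrd.{0} := FinPartOrd.of (↥P ⊕ ↥R)

/-- The poset `P_iR_i`: the disjoint union of `P₀` and `R₀` each placed above a chain of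
`i` elements. -/
def PRposet (P₀ R₀ : FinPartOrd.{0}) (i : ℕ) : FinPartOrd.{0} :=
  disjSum (withChain P₀ i) (withChain R₀ i)

/-- `C(P₀R₀) = |D(P₀)| + |D(R₀)| − |D(P₀) ∩ D(R₀)|`. -/
def CNum (P₀ R₀ : FinPartOrd.{0}) : ℕ :=
  (DAllSet P₀).ncard + (DAllSet R₀).ncard - (DAllSet P₀ ∩ DAllSet R₀).ncard

/-- The vertices of the exchange graph: the downsets of `Q` of size `n`, as actual subsets. -/
def EGVert (n : ℕ) (Q : FinPartOrd.{0}) : Type :=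
  {D : Finset ↥Q // IsDownset Q D ∧ D.card = n}

/-- The exchange graph `G_n(Q)`: two size-`n` downsets are adjacent iff they differ by
exactly one element. -/
def ExchangeGraph (n : ℕ) (Q : FinPartOrd.{0}) : SimpleGraph (EGVert n Q) where
  Adj X Y := (X.1 \ Y.1).card = 1 ∧ (Y.1 \ X.1).card = 1
  symm := ⟨fun X Y h => ⟨h.2, h.1⟩⟩
  loopless := ⟨fun X h => by
    simp only [Finset.sdiff_self, Finset.card_empty] at h
    exact absurd h.1 (by simp)⟩

/-- The downset `D` of `Q`, viewed as a poset, is isomorphic (a "copy of") `P`. -/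
def IsoTo (Q : FinPartOrd.{0}) (D : Finset ↥Q) (P : FinPartOrd.{0}) : Prop :=
  Nonempty (↥(subposet Q D) ≃o ↥P)

/-- A path `A :: M ++ [C]` in the exchange graph `G_n(Q)` whose first vertex is a copy of
`Pa`, whose last vertex is a copy of `Pb`, and all of whose internal vertices are copies of
`Pmid`. -/
def SpecialPath (n : ℕ) (Q : FinPartOrd.{0}) (Pa Pmid Pb : FinPartOrd.{0})
    (A : EGVert n Q) (M : List (EGVert n Q)) (C : EGVert n Q) : Prop :=
  List.Chain' (ExchangeGraph n Q).Adj (A :: M ++ [C]) ∧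
    IsoTo Q A.1 Pa ∧ IsoTo Q C.1 Pb ∧ ∀ v ∈ M, IsoTo Q v.1 Pmid

/-- `T` is an antichain in `Q`. -/
def IsAntichainIn (Q : FinPartOrd.{0}) (T : Finset ↥Q) : Prop :=
  ∀ x ∈ T, ∀ y ∈ T, x ≤ y → x = y

/-- The possible shapes of `A \ X` and `C \ X`: an antichain possibly together with a single
element below all of it and/or a single element above all of it, or a two-element chain
together with one incomparable element. -/
def GoodForm (Q : FinPartOrd.{0}) (S : Finset ↥Q) : Prop :=
  (∃ T : Finset ↥Q, IsAntichainIn Q T ∧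
    (S = T ∨
      (∃ b, b ∉ T ∧ S = insert b T ∧ ∀ x ∈ T, b < x) ∨
      (∃ t, t ∉ T ∧ S = insert t T ∧ ∀ x ∈ T, x < t) ∨
      (∃ b t, b ∉ T ∧ t ∉ T ∧ b ≠ t ∧ S = insert b (insert t T) ∧
        (∀ x ∈ T, b < x) ∧ ∀ x ∈ T, x < t))) ∨
  (∃ x y z : ↥Q, S = {x, y, z} ∧ x ≠ y ∧ x ≠ z ∧ y ≠ z ∧ x < y ∧
    ¬x ≤ z ∧ ¬z ≤ x ∧ ¬y ≤ z ∧ ¬z ≤ y)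


attribute [reducible] Hposet subposet

----------------------------------------------------------------
-- Auxiliary development
----------------------------------------------------------------

/-- The carrier of `Hposet l`, as a plain type. -/
abbrev HC (l : ℕ) : Type :=
  Copies l (WithTop (AntichainFin 2)) ⊕ WithTop (AntichainFin (3 * (l - 1)))

lemma af_le_iff {n : ℕ} (a b : AntichainFin n) : a ≤ b ↔ a = b := Iff.rfl

lemma wt_le_iff {n : ℕ} (u v : WithTop (AntichainFin n)) :
    u ≤ v ↔ v = ⊤ ∨ u = v := by
  cases u with
  | top => simp [top_le_iff, eq_comm]
  | coe a =>
    cases v with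
    | top => simp
    | coe b =>
      simp only [WithTop.coe_le_coe, af_le_iff]
      constructor
      · rintro rfl; exact Or.inr rfl
      · rintro (h | h)
        · exact absurd h (by simp)
        · exact le_of_eq (by exact_mod_cast h)

lemma copies_le_iff {k : ℕ} {α : Type} [PartialOrder α] (x y : Copies k α) :
    x ≤ y ↔ x.1 = y.1 ∧ x.2 ≤ y.2 := Iff.rfl

/-- The top of the component of `x`. -/
def ctop {l : ℕ} : HC l → HC l
  | Sum.inl (i, _) => Sum.inl (i, ⊤)
  | Sum.inr _ => Sum.inr ⊤

lemma ctop_idem {l : ℕ} (x : HC l) : ctop (ctop x) = ctop x := by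
  rcases x with ⟨i, u⟩ | v <;> rfl

lemma H_le_iff {l : ℕ} (x y : HC l) :
    x ≤ y ↔ x = y ∨ (y = ctop x ∧ x ≠ ctop x) := by
  rcases x with ⟨i, u⟩ | v <;> rcases y with ⟨j, w⟩ | z
  · erw [Sum.inl_le_inl_iff, copies_le_iff]
    simp only [wt_le_iff, ctop, Sum.inl.injEq, ne_eq]
    constructor
    · rintro ⟨rfl, h⟩
      rcases h with rfl | rfl
      · by_cases hu : u = (⊤ : WithTop (AntichainFin 2))
        · subst hu; left; rfl
        · right
          exact ⟨rfl, fun hc => hu (congrArg Prod.snd (Sum.inl.inj hc))⟩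
      · left; rfl
    · rintro (h | ⟨h1, _⟩)
      · obtain ⟨rfl, rfl⟩ : i = j ∧ u = w := ⟨congrArg Prod.fst (Sum.inl.inj h), congrArg Prod.snd (Sum.inl.inj h)⟩
        exact ⟨rfl, Or.inr rfl⟩
      · obtain ⟨rfl, rfl⟩ : j = i ∧ w = ⊤ := ⟨congrArg Prod.fst (Sum.inl.inj h1), congrArg Prod.snd (Sum.inl.inj h1)⟩
        exact ⟨rfl, Or.inl rfl⟩
  · simp [ctop]; exact Sum.not_inl_le_inr
  · simp [ctop]; exact Sum.not_inr_le_inl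
  · rw [Sum.inr_le_inr_iff, wt_le_iff]
    simp only [ctop, Sum.inr.injEq, ne_eq]
    rcases Classical.em (v = ⊤) with rfl | hv
    · constructor
      · rintro (rfl | _) <;> simp_all
      · rintro (rfl | ⟨rfl, h⟩) <;> simp_all
    · constructor
      · rintro (rfl | rfl)
        · exact Or.inr ⟨rfl, hv⟩
        · exact Or.inl rfl
      · rintro (rfl | ⟨rfl, _⟩)
        · exact Or.inr rfl
        · exact Or.inl rfl

lemma le_ctop {l : ℕ} (x : HC l) : x ≤ ctop x := by
  rw [H_le_iff]
  by_cases h : x = ctop x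
  · exact Or.inl h
  · exact Or.inr ⟨rfl, h⟩

lemma H_lt_iff {l : ℕ} (x y : HC l) :
    x < y ↔ y = ctop x ∧ x ≠ ctop x := by
  rw [lt_iff_le_and_ne, H_le_iff]
  constructor
  · rintro ⟨(rfl | ⟨h1, h2⟩), hne⟩
    · exact absurd rfl hne
    · exact ⟨h1, h2⟩
  · rintro ⟨h1, h2⟩
    exact ⟨Or.inr ⟨h1, h2⟩, fun h => h2 (h ▸ h1)⟩

----------------------------------------------------------------
-- Downset structure
----------------------------------------------------------------

/-- Indices of full `Λ₂` components. -/
def Kset (l : ℕ) (D : Finset (HC l)) : Finset (Fin l) :=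
  Finset.univ.filter (fun i => (Sum.inl (i, ⊤) : HC l) ∈ D)

/-- Leftover (isolated) elements of `D`. -/
def Pset (l : ℕ) (D : Finset (HC l)) : Finset (HC l) :=
  D.filter (fun x => ctop x ∉ D)

/-- Elements of `D` in fully present components. -/
def Fset (l : ℕ) (D : Finset (HC l)) : Finset (HC l) :=
  D.filter (fun x => ctop x ∈ D)

lemma mem_Kset {l : ℕ} {D : Finset (HC l)} {i : Fin l} :
    i ∈ Kset l D ↔ (Sum.inl (i, ⊤) : HC l) ∈ D := by simp [Kset]

lemma mem_Pset {l : ℕ} {D : Finset (HC l)} {x : HC l} :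
    x ∈ Pset l D ↔ x ∈ D ∧ ctop x ∉ D := by simp [Pset]

lemma mem_Fset {l : ℕ} {D : Finset (HC l)} {x : HC l} :
    x ∈ Fset l D ↔ x ∈ D ∧ ctop x ∈ D := by simp [Fset]

lemma card_F_add_P {l : ℕ} (D : Finset (HC l)) :
    (Fset l D).card + (Pset l D).card = D.card := by
  classical
  exact Finset.card_filter_add_card_filter_not (fun x => ctop x ∈ D)

lemma isolated {l : ℕ} {D : Finset (HC l)} (hD : IsDownset (Hposet l) D)
    {x y : HC l} (hx : x ∈ D) (hxl : ctop x ∉ D) (hy : y ∈ D)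
    (h : x ≤ y ∨ y ≤ x) : y = x := by
  rcases h with h | h <;> rw [H_le_iff] at h
  · rcases h with rfl | ⟨h1, _⟩
    · rfl
    · exact absurd (h1 ▸ hy) hxl
  · rcases h with rfl | ⟨h1, _⟩
    · rfl
    · exfalso
      have hcx : ctop x = x := by rw [h1, ctop_idem, ← h1]
      exact hxl (by rwa [hcx])

lemma downset_mem_of_ctop {l : ℕ} {D : Finset (HC l)} (hD : IsDownset (Hposet l) D)
    {x : HC l} (hx : ctop x ∈ D) : x ∈ D :=
  hD hx (le_ctop x)

----------------------------------------------------------------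
-- The exchange map between two downsets with the same data
----------------------------------------------------------------

/-- The structural map between two downsets with the same invariants. -/
def bmap {l : ℕ} (D D' : Finset (HC l))
    (τ : {i // i ∈ Kset l D} → {i // i ∈ Kset l D'})
    (ρ : {x // x ∈ Pset l D} → {x // x ∈ Pset l D'}) : HC l → HC l
  | Sum.inl (i, u) =>
      if h : (Sum.inl (i, ⊤) : HC l) ∈ D then Sum.inl ((τ ⟨i, mem_Kset.mpr h⟩).1, u)
      else if h2 : (Sum.inl (i, u) : HC l) ∈ Pset l D then (ρ ⟨_, h2⟩).1 else Sum.inl (i, u)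
  | Sum.inr v =>
      if (Sum.inr ⊤ : HC l) ∈ D then Sum.inr v
      else if h2 : (Sum.inr v : HC l) ∈ Pset l D then (ρ ⟨_, h2⟩).1 else Sum.inr v

section BmapLemmas

variable {l : ℕ} {D D' : Finset (HC l)}
  {τ : {i // i ∈ Kset l D} → {i // i ∈ Kset l D'}}
  {ρ : {x // x ∈ Pset l D} → {x // x ∈ Pset l D'}}

lemma bmap_inl_pos {i : Fin l} {u : WithTop (AntichainFin 2)}
    (h : (Sum.inl (i, ⊤) : HC l) ∈ D) :
    bmap D D' τ ρ (Sum.inl (i, u)) = Sum.inl ((τ ⟨i, mem_Kset.mpr h⟩).1, u) := by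
  simp [bmap, h]; rfl

lemma bmap_inr_pos {v : WithTop (AntichainFin (3 * (l - 1)))}
    (h : (Sum.inr ⊤ : HC l) ∈ D) :
    bmap D D' τ ρ (Sum.inr v) = Sum.inr v := by
  simp [bmap, h]

lemma bmap_pset {x : HC l} (h : x ∈ Pset l D) :
    bmap D D' τ ρ x = (ρ ⟨x, h⟩).1 := by
  obtain ⟨hx, hc⟩ := mem_Pset.mp h
  rcases x with ⟨i, u⟩ | v
  · have hc' : (Sum.inl (i, ⊤) : HC l) ∉ D := hc
    simp [bmap, hc', h]
  · have hc' : (Sum.inr ⊤ : HC l) ∉ D := hc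
    simp [bmap, hc', h]

lemma bmap_mem (hD' : IsDownset (Hposet l) D')
    (hb : ((Sum.inr ⊤ : HC l) ∈ D ↔ (Sum.inr ⊤ : HC l) ∈ D'))
    {x : HC l} (hx : x ∈ D) : bmap D D' τ ρ x ∈ D' := by
  by_cases hc : ctop x ∈ D
  · rcases x with ⟨i, u⟩ | v
    · rw [bmap_inl_pos hc]
      have ht : (Sum.inl ((τ ⟨i, mem_Kset.mpr hc⟩).1, ⊤) : HC l) ∈ D' :=
        mem_Kset.mp (τ ⟨i, mem_Kset.mpr hc⟩).2
      exact hD' ht (le_ctop (Sum.inl ((τ ⟨i, mem_Kset.mpr hc⟩).1, u)))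
    · rw [bmap_inr_pos hc]
      exact hD' (hb.mp hc) (le_ctop (Sum.inr v))
  · have hP : x ∈ Pset l D := mem_Pset.mpr ⟨hx, hc⟩
    rw [bmap_pset hP]
    exact (mem_Pset.mp (ρ ⟨x, hP⟩).2).1

lemma bmap_ctop_mem (hD' : IsDownset (Hposet l) D')
    (hb : ((Sum.inr ⊤ : HC l) ∈ D ↔ (Sum.inr ⊤ : HC l) ∈ D'))
    {x : HC l} (hc : ctop x ∈ D) : ctop (bmap D D' τ ρ x) ∈ D' := by
  rcases x with ⟨i, u⟩ | v
  · rw [bmap_inl_pos hc]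
    exact mem_Kset.mp (τ ⟨i, mem_Kset.mpr hc⟩).2
  · rw [bmap_inr_pos hc]
    exact hb.mp hc

end BmapLemmas

lemma inl_le_inl_iff' {l : ℕ} {i j : Fin l} {u w : WithTop (AntichainFin 2)} :
    (Sum.inl (i, u) : HC l) ≤ Sum.inl (j, w) ↔ i = j ∧ u ≤ w := by
  constructor
  · intro h
    cases h with
    | inl h => exact h
  · intro h
    exact Sum.LiftRel.inl h

section BmapEquiv

variable {l : ℕ} {D D' : Finset (HC l)}
  (τ : {i // i ∈ Kset l D} ≃ {i // i ∈ Kset l D'})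
  (ρ : {x // x ∈ Pset l D} ≃ {x // x ∈ Pset l D'})

lemma bmap_cancel
    (hb : ((Sum.inr ⊤ : HC l) ∈ D ↔ (Sum.inr ⊤ : HC l) ∈ D'))
    {x : HC l} (hx : x ∈ D) :
    bmap D' D τ.symm ρ.symm (bmap D D' τ ρ x) = x := by
  by_cases hc : ctop x ∈ D
  · rcases x with ⟨i, u⟩ | v
    · rw [bmap_inl_pos hc]
      have h' : (Sum.inl ((τ ⟨i, mem_Kset.mpr hc⟩).1, ⊤) : HC l) ∈ D' :=
        mem_Kset.mp (τ ⟨i, mem_Kset.mpr hc⟩).2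
      erw [bmap_inl_pos h']
      have he : (⟨(τ ⟨i, mem_Kset.mpr hc⟩).1, mem_Kset.mpr h'⟩ :
          {i // i ∈ Kset l D'}) = τ ⟨i, mem_Kset.mpr hc⟩ := Subtype.ext rfl
      rw [he, Equiv.symm_apply_apply]
      rfl
    · rw [bmap_inr_pos hc, bmap_inr_pos (hb.mp hc)]
  · have hP : x ∈ Pset l D := mem_Pset.mpr ⟨hx, hc⟩
    rw [bmap_pset hP]
    have hP' : ((ρ ⟨x, hP⟩ : {x // x ∈ Pset l D'}) : HC l) ∈ Pset l D' := (ρ ⟨x, hP⟩).2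
    rw [bmap_pset hP']
    have he : (⟨((ρ ⟨x, hP⟩ : {x // x ∈ Pset l D'}) : HC l), hP'⟩ :
        {x // x ∈ Pset l D'}) = ρ ⟨x, hP⟩ := Subtype.ext rfl
    rw [he, Equiv.symm_apply_apply]

lemma bmap_injOn
    (hb : ((Sum.inr ⊤ : HC l) ∈ D ↔ (Sum.inr ⊤ : HC l) ∈ D'))
    {x y : HC l} (hx : x ∈ D) (hy : y ∈ D)
    (h : bmap D D' τ ρ x = bmap D D' τ ρ y) : x = y := by
  have := congrArg (bmap D' D τ.symm ρ.symm) h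
  rwa [bmap_cancel τ ρ hb hx, bmap_cancel τ ρ hb hy] at this

lemma bmap_le_iff (hD : IsDownset (Hposet l) D) (hD' : IsDownset (Hposet l) D')
    (hb : ((Sum.inr ⊤ : HC l) ∈ D ↔ (Sum.inr ⊤ : HC l) ∈ D'))
    {x y : HC l} (hx : x ∈ D) (hy : y ∈ D) :
    bmap D D' τ ρ x ≤ bmap D D' τ ρ y ↔ x ≤ y := by
  by_cases hcx : ctop x ∈ D <;> by_cases hcy : ctop y ∈ D
  · -- both attached
    rcases x with ⟨i, u⟩ | v <;> rcases y with ⟨j, w⟩ | z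
    · erw [bmap_inl_pos hcx, bmap_inl_pos hcy, inl_le_inl_iff', inl_le_inl_iff']
      have : (τ ⟨i, mem_Kset.mpr hcx⟩).1 = (τ ⟨j, mem_Kset.mpr hcy⟩).1 ↔ i = j := by
        constructor
        · intro h
          have := τ.injective (Subtype.ext h)
          exact congrArg Subtype.val this
        · intro h
          subst h
          rfl
      simp only [this]
    · rw [bmap_inl_pos hcx, bmap_inr_pos hcy]
      exact iff_of_false (Sum.not_inl_le_inr (β := (Copies l (WithTop (AntichainFin 2))))) (Sum.not_inl_le_inr (β := (Copies l (WithTop (AntichainFin 2)))))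
    · rw [bmap_inr_pos hcx, bmap_inl_pos hcy]
      exact iff_of_false (Sum.not_inr_le_inl (α := (Copies l (WithTop (AntichainFin 2))))) (Sum.not_inr_le_inl (α := (Copies l (WithTop (AntichainFin 2)))))
    · rw [bmap_inr_pos hcx, bmap_inr_pos hcy]
  · -- y leftover
    have hPy : y ∈ Pset l D := mem_Pset.mpr ⟨hy, hcy⟩
    have hne : x ≠ y := fun h => hcy (h ▸ hcx)
    have hrhs : ¬ x ≤ y := fun h => hne (isolated hD hy hcy hx (Or.inr h))
    have hPy' : bmap D D' τ ρ y ∈ Pset l D' := by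
      rw [bmap_pset hPy]; exact (ρ ⟨y, hPy⟩).2
    obtain ⟨hy'D, hy'c⟩ := mem_Pset.mp hPy'
    have hlhs : ¬ bmap D D' τ ρ x ≤ bmap D D' τ ρ y := by
      intro h
      have := isolated hD' hy'D hy'c (bmap_mem hD' hb hx) (Or.inr h)
      exact hy'c (this ▸ bmap_ctop_mem hD' hb hcx)
    simp [hrhs, hlhs]
  · -- x leftover
    have hPx : x ∈ Pset l D := mem_Pset.mpr ⟨hx, hcx⟩
    have hne : y ≠ x := fun h => hcx (h ▸ hcy)
    have hrhs : ¬ x ≤ y := fun h => hne (isolated hD hx hcx hy (Or.inl h))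
    have hPx' : bmap D D' τ ρ x ∈ Pset l D' := by
      rw [bmap_pset hPx]; exact (ρ ⟨x, hPx⟩).2
    obtain ⟨hx'D, hx'c⟩ := mem_Pset.mp hPx'
    have hlhs : ¬ bmap D D' τ ρ x ≤ bmap D D' τ ρ y := by
      intro h
      have := isolated hD' hx'D hx'c (bmap_mem hD' hb hy) (Or.inl h)
      exact hx'c (this ▸ bmap_ctop_mem hD' hb hcy)
    simp [hrhs, hlhs]
  · -- both leftover
    have hPx : x ∈ Pset l D := mem_Pset.mpr ⟨hx, hcx⟩
    have hPy : y ∈ Pset l D := mem_Pset.mpr ⟨hy, hcy⟩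
    have hrhs : x ≤ y ↔ x = y := by
      constructor
      · intro h; exact (isolated hD hx hcx hy (Or.inl h)).symm
      · rintro rfl; rfl
    have hPx' := bmap_pset (D' := D') (τ := τ) (ρ := ρ) hPx
    have hPy' := bmap_pset (D' := D') (τ := τ) (ρ := ρ) hPy
    obtain ⟨hx'D, hx'c⟩ := mem_Pset.mp (hPx' ▸ (ρ ⟨x, hPx⟩).2)
    have hlhs : bmap D D' τ ρ x ≤ bmap D D' τ ρ y ↔
        bmap D D' τ ρ x = bmap D D' τ ρ y := by
      constructor
      · intro h
        exact (isolated hD' hx'D hx'c (bmap_mem hD' hb hy) (Or.inl h)).symm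
      · intro h; exact le_of_eq h
    rw [hlhs, hrhs]
    constructor
    · intro h; exact bmap_injOn τ ρ hb hx hy h
    · rintro rfl; rfl

end BmapEquiv

----------------------------------------------------------------
-- Equality of cardinalities of the full parts, and the main iso
----------------------------------------------------------------

/-- Simple map used to compare full parts. -/
def fmap {l : ℕ} (D : Finset (HC l)) (D' : Finset (HC l))
    (τ : {i // i ∈ Kset l D} → {i // i ∈ Kset l D'}) : HC l → HC l
  | Sum.inl (i, u) =>
      if h : (Sum.inl (i, ⊤) : HC l) ∈ D then Sum.inl ((τ ⟨i, mem_Kset.mpr h⟩).1, u)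
      else Sum.inl (i, u)
  | Sum.inr v => Sum.inr v

lemma card_Fset_eq {l : ℕ} {D D' : Finset (HC l)}
    (hD : IsDownset (Hposet l) D) (hD' : IsDownset (Hposet l) D')
    (τ : {i // i ∈ Kset l D} ≃ {i // i ∈ Kset l D'})
    (hb : ((Sum.inr ⊤ : HC l) ∈ D ↔ (Sum.inr ⊤ : HC l) ∈ D')) :
    (Fset l D).card = (Fset l D').card := by
  apply Finset.card_bij (fun x _ => fmap D D' τ x)
  · -- maps into Fset D'
    intro x hx
    obtain ⟨hxD, hxc⟩ := mem_Fset.mp hx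
    rcases x with ⟨i, u⟩ | v
    · have h : (Sum.inl (i, ⊤) : HC l) ∈ D := hxc
      have htop : (Sum.inl ((τ ⟨i, mem_Kset.mpr h⟩).1, ⊤) : HC l) ∈ D' :=
        mem_Kset.mp (τ ⟨i, mem_Kset.mpr h⟩).2
      rw [mem_Fset]
      constructor
      · show fmap D D' τ (Sum.inl (i, u)) ∈ D'
        simp only [fmap, dif_pos h]
        exact hD' htop (le_ctop _)
      · show ctop (fmap D D' τ (Sum.inl (i, u))) ∈ D'
        simp only [fmap, dif_pos h]
        exact htop
    · have h : (Sum.inr ⊤ : HC l) ∈ D := hxc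
      rw [mem_Fset]
      refine ⟨hD' (hb.mp h) (le_ctop _), hb.mp h⟩
  · -- injective
    intro x hx y hy hxy
    obtain ⟨hxD, hxc⟩ := mem_Fset.mp hx
    obtain ⟨hyD, hyc⟩ := mem_Fset.mp hy
    rcases x with ⟨i, u⟩ | v <;> rcases y with ⟨j, w⟩ | z
    · have hi : (Sum.inl (i, ⊤) : HC l) ∈ D := hxc
      have hj : (Sum.inl (j, ⊤) : HC l) ∈ D := hyc
      simp only [fmap, dif_pos hi, dif_pos hj, Sum.inl.injEq] at hxy
      have h1 : (τ ⟨i, mem_Kset.mpr hi⟩).1 = (τ ⟨j, mem_Kset.mpr hj⟩).1 :=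
        congrArg Prod.fst (Sum.inl.inj hxy)
      have h2 : u = w := congrArg Prod.snd (Sum.inl.inj hxy)
      have h3 : i = j := congrArg Subtype.val (τ.injective (Subtype.ext h1))
      rw [h2, h3]
    · have hi : (Sum.inl (i, ⊤) : HC l) ∈ D := hxc
      simp only [fmap, dif_pos hi] at hxy
      exact absurd hxy (by simp)
    · have hj : (Sum.inl (j, ⊤) : HC l) ∈ D := hyc
      simp only [fmap, dif_pos hj] at hxy
      exact absurd hxy (by simp)
    · simp only [fmap, Sum.inr.injEq] at hxy
      rw [hxy]
  · -- surjective
    intro y hy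
    obtain ⟨hyD, hyc⟩ := mem_Fset.mp hy
    rcases y with ⟨j, w⟩ | z
    · have hj : (Sum.inl (j, ⊤) : HC l) ∈ D' := hyc
      set s : {i // i ∈ Kset l D} := τ.symm ⟨j, mem_Kset.mpr hj⟩ with hs
      have hsD : (Sum.inl (s.1, ⊤) : HC l) ∈ D := mem_Kset.mp s.2
      refine ⟨Sum.inl (s.1, w), mem_Fset.mpr ⟨hD hsD (le_ctop _), hsD⟩, ?_⟩
      show fmap D D' τ (Sum.inl (s.1, w)) = Sum.inl (j, w)
      simp only [fmap, dif_pos hsD]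
      have he : (⟨s.1, mem_Kset.mpr hsD⟩ : {i // i ∈ Kset l D}) = s := Subtype.ext rfl
      rw [he, hs, Equiv.apply_symm_apply]
      rfl
    · have hz : (Sum.inr ⊤ : HC l) ∈ D' := hyc
      refine ⟨Sum.inr z, mem_Fset.mpr ⟨hD (hb.mpr hz) (le_ctop _), hb.mpr hz⟩, rfl⟩

/-- The main isomorphism lemma. -/
lemma iso_of_data {l : ℕ} {D D' : Finset ↥(Hposet l)}
    (hD : IsDownset (Hposet l) D) (hD' : IsDownset (Hposet l) D')
    (hk : (Kset l D).card = (Kset l D').card)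
    (hb : ((Sum.inr ⊤ : HC l) ∈ D ↔ (Sum.inr ⊤ : HC l) ∈ D'))
    (hc : D.card = D'.card) :
    Nonempty (↥(subposet (Hposet l) D) ≃o ↥(subposet (Hposet l) D')) := by
  have τ : {i // i ∈ Kset l D} ≃ {i // i ∈ Kset l D'} := Finset.equivOfCardEq hk
  have hF : (Fset l D).card = (Fset l D').card := card_Fset_eq hD hD' τ hb
  have hP : (Pset l D).card = (Pset l D').card := by
    have h1 := card_F_add_P D
    have h2 := card_F_add_P D'
    omega
  have ρ : {x // x ∈ Pset l D} ≃ {x // x ∈ Pset l D'} := Finset.equivOfCardEq hP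
  refine ⟨⟨⟨fun x => ⟨bmap D D' τ ρ x.1, bmap_mem hD' hb x.2⟩,
            fun y => ⟨bmap D' D τ.symm ρ.symm y.1, bmap_mem hD hb.symm y.2⟩,
            ?_, ?_⟩, ?_⟩⟩
  · intro x
    exact Subtype.ext (bmap_cancel τ ρ hb x.2)
  · intro y
    have := bmap_cancel τ.symm ρ.symm hb.symm y.2
    simpa using Subtype.ext this
  · intro a b
    exact bmap_le_iff τ ρ hD hD' hb a.2 b.2

----------------------------------------------------------------
-- Isomorphism invariants
----------------------------------------------------------------

/-- The number of elements strictly below `x`. -/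
def nBelow (Q : FinPartOrd.{0}) (x : ↥Q) : ℕ :=
  (Finset.univ.filter (fun y => y < x)).card

/-- Number of elements with exactly 2 elements strictly below. -/
def inv2 (Q : FinPartOrd.{0}) : ℕ :=
  (Finset.univ.filter (fun x => nBelow Q x = 2)).card

/-- Number of elements with at least 3 elements strictly below. -/
def inv3 (Q : FinPartOrd.{0}) : ℕ :=
  (Finset.univ.filter (fun x => 3 ≤ nBelow Q x)).card

lemma nBelow_iso {P Q : FinPartOrd.{0}} (e : ↥P ≃o ↥Q) (x : ↥P) :
    nBelow Q (e x) = nBelow P x := by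
  apply (Finset.card_bij (fun y _ => e y) ?_ ?_ ?_).symm
  · intro y hy
    simp only [Finset.mem_filter, Finset.mem_univ, true_and] at hy ⊢
    exact e.strictMono hy
  · intro y _ z _ h
    exact e.injective h
  · intro z hz
    simp only [Finset.mem_filter, Finset.mem_univ, true_and] at hz ⊢
    refine ⟨e.symm z, ?_, by simp⟩
    have := e.symm.strictMono hz
    simpa using this

lemma invFilter_iso {P Q : FinPartOrd.{0}} (e : ↥P ≃o ↥Q) (p : ℕ → Prop)
    [∀ n, Decidable (p n)] :
    (Finset.univ.filter (fun x => p (nBelow P x))).card =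
      (Finset.univ.filter (fun x => p (nBelow Q x))).card := by
  apply Finset.card_bij (fun x _ => e x)
  · intro x hx
    simp only [Finset.mem_filter, Finset.mem_univ, true_and] at hx ⊢
    rwa [nBelow_iso e]
  · intro x _ y _ h
    exact e.injective h
  · intro y hy
    simp only [Finset.mem_filter, Finset.mem_univ, true_and] at hy ⊢
    refine ⟨e.symm y, ?_, by simp⟩
    have h2 : nBelow P (e.symm y) = nBelow Q y := by
      rw [← nBelow_iso e (e.symm y), e.apply_symm_apply]
    rw [h2]
    exact hy

lemma inv2_iso {P Q : FinPartOrd.{0}} (e : ↥P ≃o ↥Q) : inv2 P = inv2 Q := by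
  unfold inv2
  exact invFilter_iso e (fun n => n = 2)

lemma inv3_iso {P Q : FinPartOrd.{0}} (e : ↥P ≃o ↥Q) : inv3 P = inv3 Q := by
  unfold inv3
  exact invFilter_iso e (fun n => 3 ≤ n)

/-- `inv2` on unlabelled posets. -/
def uinv2 : UPoset → ℕ :=
  Quotient.lift inv2 fun _ _ h => h.elim fun e => inv2_iso e

/-- `inv3` on unlabelled posets. -/
def uinv3 : UPoset → ℕ :=
  Quotient.lift inv3 fun _ _ h => h.elim fun e => inv3_iso e

lemma uinv2_cls (P : FinPartOrd.{0}) : uinv2 (cls P) = inv2 P := rfl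
lemma uinv3_cls (P : FinPartOrd.{0}) : uinv3 (cls P) = inv3 P := rfl

----------------------------------------------------------------
-- Invariants of downsets of `Hposet l`
----------------------------------------------------------------

section Invs

variable {l : ℕ} {D : Finset ↥(Hposet l)}

lemma sub_lt_iff (x y : ↥(subposet (Hposet l) D)) : x < y ↔ (x.1 : HC l) < y.1 := by
  constructor
  · intro h
    exact lt_of_le_of_ne h.le (fun hv => h.ne (Subtype.ext hv))
  · intro h
    exact lt_of_le_of_ne h.le (fun hv => h.ne (congrArg Subtype.val hv))

lemma nBelow_minimal (x : ↥(subposet (Hposet l) D)) (h : (x.1 : HC l) ≠ ctop x.1) :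
    nBelow (subposet (Hposet l) D) x = 0 := by
  rw [nBelow, Finset.card_eq_zero, Finset.filter_eq_empty_iff]
  intro y _
  rw [sub_lt_iff, H_lt_iff]
  rintro ⟨h1, _⟩
  exact h (by rw [h1, ctop_idem, ← h1])

lemma nBelow_lamtop (hD : IsDownset (Hposet l) D) (i : Fin l)
    (hx : (Sum.inl (i, ⊤) : HC l) ∈ D) :
    nBelow (subposet (Hposet l) D) ⟨Sum.inl (i, ⊤), hx⟩ = 2 := by
  classical
  set a0 : AntichainFin 2 := ⟨0, by omega⟩ with ha0
  set a1 : AntichainFin 2 := ⟨1, by omega⟩ with ha1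
  have hm : ∀ a : AntichainFin 2, (Sum.inl (i, (a : WithTop (AntichainFin 2))) : HC l) ∈ D :=
    fun a => hD hx (le_ctop (Sum.inl (i, (a : WithTop (AntichainFin 2)))))
  have key : ∀ y : ↥(subposet (Hposet l) D),
      (y < ⟨Sum.inl (i, ⊤), hx⟩ ↔
        (y = ⟨Sum.inl (i, (a0 : WithTop (AntichainFin 2))), hm a0⟩ ∨
         y = ⟨Sum.inl (i, (a1 : WithTop (AntichainFin 2))), hm a1⟩)) := by
    intro y
    rw [sub_lt_iff, H_lt_iff]
    constructor
    · rintro ⟨h1, h2⟩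
      obtain ⟨yv, hy⟩ := y
      rcases yv with ⟨j, u⟩ | v
      · have hj : (Sum.inl (i, (⊤ : WithTop (AntichainFin 2))) : HC l) =
            Sum.inl (j, ⊤) := h1
        obtain rfl : i = j := congrArg Prod.fst (Sum.inl.inj hj)
        have h2' : (Sum.inl (i, u) : HC l) ≠ ctop (Sum.inl (i, u)) := h2
        have hu : u ≠ ⊤ := fun hu' => h2' (by subst hu'; rfl)
        rcases u with _ | a
        · exact absurd rfl hu
        rcases a with ⟨av, hav⟩
        interval_cases av
        · left; exact Subtype.ext rfl
        · right; exact Subtype.ext rfl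
      · exact absurd h1 (by simp [ctop])
    · rintro (h | h) <;> rw [h] <;>
      · refine ⟨rfl, fun hc => ?_⟩
        have h3 := congrArg Prod.snd (Sum.inl.inj hc)
        exact absurd h3 (by simp)
  have hset : (Finset.univ.filter
      (fun y : ↥(subposet (Hposet l) D) => y < ⟨Sum.inl (i, ⊤), hx⟩)) =
      {⟨Sum.inl (i, (a0 : WithTop (AntichainFin 2))), hm a0⟩,
       ⟨Sum.inl (i, (a1 : WithTop (AntichainFin 2))), hm a1⟩} := by
    ext y
    simp only [Finset.mem_filter, Finset.mem_univ, true_and, key y,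
      Finset.mem_insert, Finset.mem_singleton]
  rw [nBelow, hset, Finset.card_insert_of_notMem, Finset.card_singleton]
  rw [Finset.mem_singleton]
  intro h
  have h2 := congrArg Prod.snd (Sum.inl.inj (congrArg Subtype.val h))
  rw [WithTop.coe_inj] at h2
  exact absurd (congrArg Fin.val h2) (by simp [ha0, ha1])

lemma nBelow_bigtop (hD : IsDownset (Hposet l) D)
    (hx : (Sum.inr ⊤ : HC l) ∈ D) :
    nBelow (subposet (Hposet l) D) ⟨Sum.inr ⊤, hx⟩ = 3 * (l - 1) := by
  classical
  have hm : ∀ m : AntichainFin (3 * (l - 1)),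
      (Sum.inr (m : WithTop (AntichainFin (3 * (l - 1)))) : HC l) ∈ D :=
    fun m => hD hx (le_ctop (Sum.inr (m : WithTop (AntichainFin (3 * (l - 1))))))
  have hcard : ((Finset.univ : Finset (AntichainFin (3 * (l - 1))))).card =
      (Finset.univ.filter
        (fun y : ↥(subposet (Hposet l) D) => y < ⟨Sum.inr ⊤, hx⟩)).card := by
    apply Finset.card_bij (fun (m : AntichainFin (3 * (l - 1))) _ =>
      (⟨Sum.inr (m : WithTop (AntichainFin (3 * (l - 1)))), hm m⟩ :
        ↥(subposet (Hposet l) D)))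
    · intro m _
      simp only [Finset.mem_filter, Finset.mem_univ, true_and]
      rw [sub_lt_iff, H_lt_iff]
      exact ⟨rfl, fun hc => absurd (Sum.inr.inj hc) (by simp)⟩
    · intro m _ m' _ h
      have h2 := Sum.inr.inj (congrArg Subtype.val h)
      rwa [WithTop.coe_inj] at h2
    · intro y hy
      simp only [Finset.mem_filter, Finset.mem_univ, true_and] at hy
      rw [sub_lt_iff, H_lt_iff] at hy
      obtain ⟨h1, h2⟩ := hy
      obtain ⟨yv, hyD⟩ := y
      rcases yv with ⟨j, u⟩ | v
      · exact absurd h1 (by simp [ctop])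
      · have h2' : (Sum.inr v : HC l) ≠ ctop (Sum.inr v) := h2
        have hv : v ≠ ⊤ := fun hv' => h2' (by subst hv'; rfl)
        rcases v with _ | m
        · exact absurd rfl hv
        · exact ⟨m, Finset.mem_univ m, Subtype.ext rfl⟩
  rw [nBelow, ← hcard, Finset.card_univ]
  exact Fintype.card_fin _

end Invs

section Invs2

variable {l : ℕ} {D : Finset ↥(Hposet l)}

lemma nBelow_inl_some (hD : IsDownset (Hposet l) D) (j : Fin l) (a : AntichainFin 2)
    (hxD : (Sum.inl (j, some a) : HC l) ∈ D) :
    nBelow (subposet (Hposet l) D) ⟨Sum.inl (j, some a), hxD⟩ = 0 :=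
  nBelow_minimal _ (fun hc => Option.some_ne_none a (congrArg Prod.snd (Sum.inl.inj hc)))

lemma nBelow_inr_some (hD : IsDownset (Hposet l) D) (m : AntichainFin (3 * (l - 1)))
    (hxD : (Sum.inr (some m) : HC l) ∈ D) :
    nBelow (subposet (Hposet l) D) ⟨Sum.inr (some m), hxD⟩ = 0 :=
  nBelow_minimal _ (fun hc => Option.some_ne_none m (Sum.inr.inj hc))

lemma nBelow_inl_none (hD : IsDownset (Hposet l) D) (j : Fin l)
    (hxD : (Sum.inl (j, none) : HC l) ∈ D) :
    nBelow (subposet (Hposet l) D) ⟨Sum.inl (j, none), hxD⟩ = 2 :=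
  nBelow_lamtop hD j hxD

lemma nBelow_inr_none (hD : IsDownset (Hposet l) D)
    (hxD : (Sum.inr none : HC l) ∈ D) :
    nBelow (subposet (Hposet l) D) ⟨Sum.inr none, hxD⟩ = 3 * (l - 1) :=
  nBelow_bigtop hD hxD

lemma inv2_sub (hl : 2 ≤ l) (hD : IsDownset (Hposet l) D) :
    inv2 (subposet (Hposet l) D) = (Kset l D).card := by
  classical
  unfold inv2
  apply (Finset.card_bij
    (fun (i : Fin l) (hi : i ∈ Kset l D) =>
      (⟨Sum.inl (i, ⊤), mem_Kset.mp hi⟩ : ↥(subposet (Hposet l) D))) ?_ ?_ ?_).symm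
  · intro i hi
    simp only [Finset.mem_filter, Finset.mem_univ, true_and]
    exact nBelow_lamtop hD i (mem_Kset.mp hi)
  · intro i hi j hj h
    exact congrArg Prod.fst (Sum.inl.inj (congrArg Subtype.val h))
  · intro x hx
    simp only [Finset.mem_filter, Finset.mem_univ, true_and] at hx
    obtain ⟨xv, hxD⟩ := x
    rcases xv with ⟨j, u⟩ | v
    · rcases u with _ | a
      · exact ⟨j, mem_Kset.mpr hxD, Subtype.ext rfl⟩
      · have := nBelow_inl_some hD j a hxD
        omega
    · rcases v with _ | m
      · have h3 : (3 : ℕ) * (l - 1) = 2 := by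
          rw [← nBelow_inr_none hD hxD]
          exact hx
        omega
      · have := nBelow_inr_some hD m hxD
        omega

lemma inv3_sub (hl : 2 ≤ l) (hD : IsDownset (Hposet l) D) :
    inv3 (subposet (Hposet l) D) = if (Sum.inr ⊤ : HC l) ∈ D then 1 else 0 := by
  classical
  unfold inv3
  by_cases hbig : (Sum.inr ⊤ : HC l) ∈ D
  · rw [if_pos hbig]
    have hset : (Finset.univ.filter
        (fun x : ↥(subposet (Hposet l) D) => 3 ≤ nBelow (subposet (Hposet l) D) x)) =
        {⟨Sum.inr ⊤, hbig⟩} := by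
      ext x
      simp only [Finset.mem_filter, Finset.mem_univ, true_and, Finset.mem_singleton]
      constructor
      · intro hx
        obtain ⟨xv, hxD⟩ := x
        rcases xv with ⟨j, u⟩ | v
        · rcases u with _ | a
          · have := nBelow_inl_none hD j hxD
            omega
          · have := nBelow_inl_some hD j a hxD
            omega
        · rcases v with _ | m
          · exact Subtype.ext rfl
          · have := nBelow_inr_some hD m hxD
            omega
      · rintro rfl
        rw [nBelow_bigtop hD hbig]
        omega
    rw [hset, Finset.card_singleton]
  · rw [if_neg hbig]
    rw [Finset.card_eq_zero, Finset.filter_eq_empty_iff]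
    intro x _
    obtain ⟨xv, hxD⟩ := x
    rcases xv with ⟨j, u⟩ | v
    · rcases u with _ | a
      · have := nBelow_inl_none hD j hxD
        omega
      · have := nBelow_inl_some hD j a hxD
        omega
    · rcases v with _ | m
      · exact absurd hxD hbig
      · have := nBelow_inr_some hD m hxD
        omega

end Invs2

----------------------------------------------------------------
-- Cardinality facts and witnesses
----------------------------------------------------------------

lemma card_wt (n : ℕ) : Fintype.card (WithTop (AntichainFin n)) = n + 1 := by
  have h : Fintype.card (Option (Fin n)) = n + 1 := by simp
  exact h

lemma card_af (n : ℕ) : Fintype.card (AntichainFin n) = n := by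
  have h : Fintype.card (Fin n) = n := by simp
  exact h

lemma inl_injective {l : ℕ} :
    Function.Injective (fun p : Copies l (WithTop (AntichainFin 2)) => (Sum.inl p : HC l)) :=
  fun _ _ h => Sum.inl.inj h

lemma inr_injective' {l : ℕ} :
    Function.Injective (fun v : WithTop (AntichainFin (3 * (l - 1))) => (Sum.inr v : HC l)) :=
  fun _ _ h => Sum.inr.inj h

/-- If the big top is in a downset of size `3l`, no `Λ₂` component is full. -/
lemma K_zero_of_big {l : ℕ} {D : Finset ↥(Hposet l)} (hD : IsDownset (Hposet l) D)
    (hc : D.card = 3 * l) (hbig : (Sum.inr ⊤ : HC l) ∈ D) (hl : 2 ≤ l) :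
    (Kset l D).card = 0 := by
  classical
  rw [Finset.card_eq_zero]
  by_contra hne
  obtain ⟨i, hi⟩ := Finset.nonempty_iff_ne_empty.mpr hne
  have hitop : (Sum.inl (i, ⊤) : HC l) ∈ D := mem_Kset.mp hi
  set U : Finset (HC l) :=
    (Finset.univ.image (fun u : WithTop (AntichainFin 2) => (Sum.inl (i, u) : HC l))) ∪
    (Finset.univ.image (fun v : WithTop (AntichainFin (3 * (l - 1))) => (Sum.inr v : HC l)))
    with hU
  have hsub : U ⊆ D := by
    intro x hx
    rw [hU, Finset.mem_union] at hx
    rcases hx with hx | hx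
    · obtain ⟨u, _, rfl⟩ := Finset.mem_image.mp hx
      exact hD hitop (le_ctop (Sum.inl (i, u)))
    · obtain ⟨v, _, rfl⟩ := Finset.mem_image.mp hx
      exact hD hbig (le_ctop (Sum.inr v))
  have hcard : U.card = 3 * l + 1 := by
    rw [hU, Finset.card_union_of_disjoint, Finset.card_image_of_injective _
      (fun u u' h => by exact congrArg Prod.snd (Sum.inl.inj h)),
      Finset.card_image_of_injective _ inr_injective', Finset.card_univ,
      Finset.card_univ, card_wt, card_wt]
    · omega
    · rw [Finset.disjoint_left]
      rintro x hx hx'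
      obtain ⟨u, _, rfl⟩ := Finset.mem_image.mp hx
      obtain ⟨v, _, h⟩ := Finset.mem_image.mp hx'
      exact absurd h (by simp)
  have := Finset.card_le_card hsub
  omega

/-- Downsets consisting of full components and isolated minimals. -/
lemma downset_of {l : ℕ} (S : Finset (HC l))
    (h : ∀ x ∈ S, ∀ b : HC l, x = ctop b → b ∈ S) : IsDownset (Hposet l) S := by
  intro a b ha hle
  rw [H_le_iff] at hle
  rcases hle with rfl | ⟨h1, _⟩
  · exact ha
  · exact h a ha b h1

lemma card_fin_filter_lt {l k : ℕ} (hk : k ≤ l) :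
    ((Finset.univ : Finset (Fin l)).filter (fun i => i.val < k)).card = k := by
  classical
  have h : ((Finset.univ : Finset (Fin l)).filter (fun i => i.val < k)).card =
      (Finset.range k).card := by
    apply Finset.card_bij (fun (i : Fin l) _ => i.val)
    · intro i hi
      simp only [Finset.mem_filter] at hi
      exact Finset.mem_range.mpr hi.2
    · intro i _ j _ h
      exact Fin.ext h
    · intro j hj
      have hjl : j < l := lt_of_lt_of_le (Finset.mem_range.mp hj) hk
      exact ⟨⟨j, hjl⟩, Finset.mem_filter.mpr ⟨Finset.mem_univ _, Finset.mem_range.mp hj⟩, rfl⟩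
  rw [h, Finset.card_range]

/-- witness with `k ≥ 1` full components and no big top. -/
lemma exists_downset_k {l : ℕ} (hl : 2 ≤ l) (k : ℕ) (hk1 : 1 ≤ k) (hk : k ≤ l) :
    ∃ D : Finset ↥(Hposet l), IsDownset (Hposet l) D ∧ D.card = 3 * l ∧
      (Kset l D).card = k ∧ (Sum.inr ⊤ : HC l) ∉ D := by
  classical
  set B0 : Finset (HC l) :=
    Finset.univ.image (fun m : AntichainFin (3 * (l - 1)) => (Sum.inr (some m) : HC l))
    with hB0
  have hB0card : B0.card = 3 * (l - 1) := by
    rw [hB0, Finset.card_image_of_injective _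
      (fun m m' h => by
        have := Sum.inr.inj h
        exact Option.some_injective _ this), Finset.card_univ, card_af]
  set Fk : Finset (HC l) :=
    (((Finset.univ : Finset (Fin l)).filter (fun i => i.val < k)) ×ˢ
      (Finset.univ : Finset (WithTop (AntichainFin 2)))).image
      (fun p : Copies l (WithTop (AntichainFin 2)) => (Sum.inl p : HC l)) with hFk
  have hFkcard : Fk.card = 3 * k := by
    erw [hFk, Finset.card_image_of_injective _ inl_injective, Finset.card_product,
      card_fin_filter_lt hk, Finset.card_univ, card_wt]
    ring
  have hFkmem : ∀ x : HC l, x ∈ Fk ↔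
      ∃ (i : Fin l) (u : WithTop (AntichainFin 2)), i.val < k ∧ x = Sum.inl (i, u) := by
    intro x
    rw [hFk]
    erw [Finset.mem_image]
    constructor
    · rintro ⟨⟨i, u⟩, hi, rfl⟩
      erw [Finset.mem_product] at hi
      exact ⟨i, u, (Finset.mem_filter.mp hi.1).2, rfl⟩
    · rintro ⟨i, u, hik, rfl⟩
      exact ⟨(i, u), Finset.mem_product.mpr
        ⟨Finset.mem_filter.mpr ⟨Finset.mem_univ _, hik⟩, Finset.mem_univ _⟩, rfl⟩
  have hpool : 3 * (l - k) ≤ B0.card := by rw [hB0card]; omega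
  obtain ⟨t, ht, htcard⟩ := Finset.exists_subset_card_eq hpool
  have htmem : ∀ x ∈ t, ∃ m, x = (Sum.inr (some m) : HC l) := by
    intro x hx
    have := ht hx
    rw [hB0] at this
    obtain ⟨m, _, rfl⟩ := Finset.mem_image.mp this
    exact ⟨m, rfl⟩
  have hdisj : Disjoint Fk t := by
    rw [Finset.disjoint_left]
    intro x hx hx'
    obtain ⟨i, u, _, rfl⟩ := (hFkmem _).mp hx
    obtain ⟨m, hm⟩ := htmem _ hx'
    exact absurd hm (by simp)
  refine ⟨Fk.disjUnion t hdisj, ?_, ?_, ?_, ?_⟩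
  · apply downset_of
    intro x hx b hxb
    rw [Finset.mem_disjUnion] at hx ⊢
    rcases hx with hx | hx
    · obtain ⟨i, u, hik, rfl⟩ := (hFkmem _).mp hx
      left
      rcases b with ⟨j, w⟩ | v
      · have h2 : (Sum.inl (i, u) : HC l) = Sum.inl (j, ⊤) := hxb
        obtain rfl : i = j := congrArg Prod.fst (Sum.inl.inj h2)
        exact (hFkmem _).mpr ⟨i, w, hik, rfl⟩
      · exact absurd hxb (by simp [ctop])
    · obtain ⟨m, rfl⟩ := htmem _ hx
      exfalso
      rcases b with ⟨j, w⟩ | v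
      · exact absurd hxb (by simp [ctop])
      · have h2 : (Sum.inr (some m) : HC l) = Sum.inr ⊤ := hxb
        exact Option.some_ne_none m (Sum.inr.inj h2)
  · rw [Finset.card_disjUnion, hFkcard, htcard]
    omega
  · rw [show Kset l (Fk.disjUnion t hdisj) =
        (Finset.univ : Finset (Fin l)).filter (fun i => i.val < k) by
      ext i
      rw [mem_Kset, Finset.mem_disjUnion, Finset.mem_filter]
      constructor
      · rintro (h | h)
        · obtain ⟨j, u, hjk, he⟩ := (hFkmem _).mp h
          obtain rfl : i = j := congrArg Prod.fst (Sum.inl.inj he)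
          exact ⟨Finset.mem_univ _, hjk⟩
        · obtain ⟨m, hm⟩ := htmem _ h
          exact absurd hm (by simp)
      · rintro ⟨_, hik⟩
        exact Or.inl ((hFkmem _).mpr ⟨i, ⊤, hik, rfl⟩)]
    exact card_fin_filter_lt hk
  · rw [Finset.mem_disjUnion]
    rintro (h | h)
    · obtain ⟨i, u, _, he⟩ := (hFkmem _).mp h
      exact absurd he (by simp)
    · obtain ⟨m, hm⟩ := htmem _ h
      exact absurd (Sum.inr.inj hm) (by simp)

lemma ctop_shape {l : ℕ} (b : HC l) :
    (∃ j, ctop b = Sum.inl (j, ⊤)) ∨ ctop b = Sum.inr ⊤ := by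
  rcases b with ⟨j, w⟩ | v
  · exact Or.inl ⟨j, rfl⟩
  · exact Or.inr rfl

lemma downset_of_minimals {l : ℕ} (S : Finset (HC l))
    (h : ∀ x ∈ S, (∃ j a, x = Sum.inl (j, some a)) ∨ (∃ m, x = Sum.inr (some m))) :
    IsDownset (Hposet l) S := by
  apply downset_of
  intro x hx b hxb
  exfalso
  rcases ctop_shape b with ⟨j', he⟩ | he <;> rw [he] at hxb <;>
    rcases h x hx with ⟨j, a, rfl⟩ | ⟨m, rfl⟩
  · exact Option.some_ne_none a (congrArg Prod.snd (Sum.inl.inj hxb))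
  · exact absurd hxb (by simp)
  · exact absurd hxb (by simp)
  · exact Option.some_ne_none m (Sum.inr.inj hxb)

lemma exists_downset_zero {l : ℕ} (hl : 2 ≤ l) :
    ∃ D : Finset ↥(Hposet l), IsDownset (Hposet l) D ∧ D.card = 3 * l ∧
      (Kset l D).card = 0 ∧ (Sum.inr ⊤ : HC l) ∉ D := by
  classical
  set B0 : Finset (HC l) :=
    Finset.univ.image (fun m : AntichainFin (3 * (l - 1)) => (Sum.inr (some m) : HC l))
    with hB0
  have hB0card : B0.card = 3 * (l - 1) := by
    erw [hB0, Finset.card_image_of_injective _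
      (fun m m' h => Option.some_injective _ (Sum.inr.inj h)), Finset.card_univ, card_af]
  set i0 : Fin l := ⟨0, by omega⟩ with hi0
  set i1 : Fin l := ⟨1, by omega⟩ with hi1
  set a0 : AntichainFin 2 := ⟨0, by omega⟩ with ha0
  set a1 : AntichainFin 2 := ⟨1, by omega⟩ with ha1
  set x0 : HC l := Sum.inl (i0, some a0) with hx0
  set x1 : HC l := Sum.inl (i0, some a1) with hx1
  set x2 : HC l := Sum.inl (i1, some a0) with hx2
  have hne01 : x0 ≠ x1 := by
    intro h
    have := Option.some_injective _ (congrArg Prod.snd (Sum.inl.inj h))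
    exact absurd (congrArg Fin.val this) (by simp [ha0, ha1])
  have hne02 : x0 ≠ x2 := by
    intro h
    have := congrArg Prod.fst (Sum.inl.inj h)
    exact absurd (congrArg Fin.val this) (by simp [hi0, hi1])
  have hne12 : x1 ≠ x2 := by
    intro h
    have := congrArg Prod.fst (Sum.inl.inj h)
    exact absurd (congrArg Fin.val this) (by simp [hi0, hi1])
  set T : Finset (HC l) := {x0, x1, x2} with hT
  have hTcard : T.card = 3 := by
    rw [hT, Finset.card_insert_of_notMem (by simp [hne01, hne02]),
      Finset.card_insert_of_notMem (by simp [hne12]), Finset.card_singleton]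
  have hTmem : ∀ x ∈ T, ∃ j a, x = (Sum.inl (j, some a) : HC l) := by
    intro x hx
    rw [hT, Finset.mem_insert, Finset.mem_insert, Finset.mem_singleton] at hx
    rcases hx with rfl | rfl | rfl
    · exact ⟨i0, a0, rfl⟩
    · exact ⟨i0, a1, rfl⟩
    · exact ⟨i1, a0, rfl⟩
  have hdisj : Disjoint B0 T := by
    rw [Finset.disjoint_left]
    intro x hx hx'
    rw [hB0] at hx
    obtain ⟨m, _, rfl⟩ := Finset.mem_image.mp hx
    obtain ⟨j, a, he⟩ := hTmem _ hx'
    exact absurd he (by simp)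
  refine ⟨B0.disjUnion T hdisj, ?_, ?_, ?_, ?_⟩
  · apply downset_of_minimals
    intro x hx
    rw [Finset.mem_disjUnion] at hx
    rcases hx with hx | hx
    · rw [hB0] at hx
      obtain ⟨m, _, rfl⟩ := Finset.mem_image.mp hx
      exact Or.inr ⟨m, rfl⟩
    · obtain ⟨j, a, rfl⟩ := hTmem _ hx
      exact Or.inl ⟨j, a, rfl⟩
  · rw [Finset.card_disjUnion, hB0card, hTcard]
    omega
  · rw [Finset.card_eq_zero, Finset.eq_empty_iff_forall_notMem]
    intro i hi
    have h := mem_Kset.mp hi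
    rw [Finset.mem_disjUnion] at h
    rcases h with h | h
    · rw [hB0] at h
      obtain ⟨m, _, he⟩ := Finset.mem_image.mp h
      exact absurd he (by simp)
    · obtain ⟨j, a, he⟩ := hTmem _ h
      exact Option.some_ne_none a (congrArg Prod.snd (Sum.inl.inj he)).symm
  · intro h
    rw [Finset.mem_disjUnion] at h
    rcases h with h | h
    · rw [hB0] at h
      obtain ⟨m, _, he⟩ := Finset.mem_image.mp h
      exact Option.some_ne_none m (Sum.inr.inj he)
    · obtain ⟨j, a, he⟩ := hTmem _ h
      exact absurd he (by simp)

lemma exists_downset_star {l : ℕ} (hl : 2 ≤ l) :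
    ∃ D : Finset ↥(Hposet l), IsDownset (Hposet l) D ∧ D.card = 3 * l ∧
      (Kset l D).card = 0 ∧ (Sum.inr ⊤ : HC l) ∈ D := by
  classical
  set Ball : Finset (HC l) :=
    Finset.univ.image (fun v : WithTop (AntichainFin (3 * (l - 1))) => (Sum.inr v : HC l))
    with hBall
  have hBallcard : Ball.card = 3 * (l - 1) + 1 := by
    rw [hBall, Finset.card_image_of_injective _ inr_injective', Finset.card_univ, card_wt]
  set i0 : Fin l := ⟨0, by omega⟩ with hi0
  set a0 : AntichainFin 2 := ⟨0, by omega⟩ with ha0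
  set a1 : AntichainFin 2 := ⟨1, by omega⟩ with ha1
  set x0 : HC l := Sum.inl (i0, some a0) with hx0
  set x1 : HC l := Sum.inl (i0, some a1) with hx1
  have hne01 : x0 ≠ x1 := by
    intro h
    have := Option.some_injective _ (congrArg Prod.snd (Sum.inl.inj h))
    exact absurd (congrArg Fin.val this) (by simp [ha0, ha1])
  set T : Finset (HC l) := {x0, x1} with hT
  have hTcard : T.card = 2 := by
    rw [hT, Finset.card_insert_of_notMem (by simp [hne01]), Finset.card_singleton]
  have hTmem : ∀ x ∈ T, ∃ a, x = (Sum.inl (i0, some a) : HC l) := by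
    intro x hx
    rw [hT, Finset.mem_insert, Finset.mem_singleton] at hx
    rcases hx with rfl | rfl
    · exact ⟨a0, rfl⟩
    · exact ⟨a1, rfl⟩
  have hdisj : Disjoint Ball T := by
    rw [Finset.disjoint_left]
    intro x hx hx'
    rw [hBall] at hx
    obtain ⟨v, _, rfl⟩ := Finset.mem_image.mp hx
    obtain ⟨a, he⟩ := hTmem _ hx'
    exact absurd he (by simp)
  refine ⟨Ball.disjUnion T hdisj, ?_, ?_, ?_, ?_⟩
  · apply downset_of
    intro x hx b hxb
    rw [Finset.mem_disjUnion] at hx ⊢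
    rcases hx with hx | hx
    · rw [hBall] at hx
      obtain ⟨v, _, rfl⟩ := Finset.mem_image.mp hx
      rcases ctop_shape b with ⟨j', he⟩ | he <;> rw [he] at hxb
      · exact absurd hxb (by simp)
      · -- x = inr v = inr ⊤, b has ctop b = inr ⊤, so b = inr w
        left
        rcases b with ⟨j, w⟩ | w
        · exact absurd he (by simp [ctop])
        · rw [hBall]
          exact Finset.mem_image.mpr ⟨w, Finset.mem_univ _, rfl⟩
    · obtain ⟨a, rfl⟩ := hTmem _ hx
      exfalso
      rcases ctop_shape b with ⟨j', he⟩ | he <;> rw [he] at hxb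
      · exact Option.some_ne_none a (congrArg Prod.snd (Sum.inl.inj hxb))
      · exact absurd hxb (by simp)
  · rw [Finset.card_disjUnion, hBallcard, hTcard]
    omega
  · rw [Finset.card_eq_zero, Finset.eq_empty_iff_forall_notMem]
    intro i hi
    have h := mem_Kset.mp hi
    rw [Finset.mem_disjUnion] at h
    rcases h with h | h
    · rw [hBall] at h
      obtain ⟨v, _, he⟩ := Finset.mem_image.mp h
      exact absurd he (by simp)
    · obtain ⟨a, he⟩ := hTmem _ h
      exact Option.some_ne_none a (congrArg Prod.snd (Sum.inl.inj he)).symm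
  · rw [Finset.mem_disjUnion]
    left
    rw [hBall]
    exact Finset.mem_image.mpr ⟨⊤, Finset.mem_univ _, rfl⟩

theorem H_dNum (l : ℕ) (hl : 2 ≤ l) : dNum (3 * l) (Hposet l) = l + 2 := by
  classical
  rw [dNum]
  set S : Set UPoset := DSet (3 * l) (Hposet l) with hS
  set Φ : UPoset → ℕ × ℕ := fun c => (uinv2 c, uinv3 c) with hΦ
  have hval : ∀ D : Finset ↥(Hposet l), IsDownset (Hposet l) D →
      Φ (cls (subposet (Hposet l) D)) =
        ((Kset l D).card, if (Sum.inr ⊤ : HC l) ∈ D then 1 else 0) := by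
    intro D hD
    rw [hΦ]
    simp only
    rw [uinv2_cls, uinv3_cls, inv2_sub hl hD, inv3_sub hl hD]
  -- injectivity of Φ on S
  have hInj : Set.InjOn Φ S := by
    rintro c hc c' hc' h
    obtain ⟨D, hD, hcard, rfl⟩ := hc
    obtain ⟨D', hD', hcard', rfl⟩ := hc'
    rw [hval D hD, hval D' hD'] at h
    have h1 : (Kset l D).card = (Kset l D').card := congrArg Prod.fst h
    have h2 : (if (Sum.inr ⊤ : HC l) ∈ D then (1:ℕ) else 0) =
        (if (Sum.inr ⊤ : HC l) ∈ D' then (1:ℕ) else 0) := congrArg Prod.snd h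
    have hb : ((Sum.inr ⊤ : HC l) ∈ D ↔ (Sum.inr ⊤ : HC l) ∈ D') := by
      by_cases hA : (Sum.inr ⊤ : HC l) ∈ D <;>
        by_cases hB : (Sum.inr ⊤ : HC l) ∈ D' <;> simp_all
    exact Quot.sound (iso_of_data hD hD' h1 hb (hcard.trans hcard'.symm))
  -- target finset
  have hdisjG : Disjoint ((Finset.range (l + 1)).image (fun k => ((k, 0) : ℕ × ℕ)))
      ({((0 : ℕ), (1 : ℕ))} : Finset (ℕ × ℕ)) := by
    rw [Finset.disjoint_right]
    intro p hp hp'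
    rw [Finset.mem_singleton] at hp
    obtain ⟨k, _, he⟩ := Finset.mem_image.mp hp'
    rw [hp] at he
    exact absurd (congrArg Prod.snd he) (by simp)
  set G : Finset (ℕ × ℕ) :=
    ((Finset.range (l + 1)).image (fun k => ((k, 0) : ℕ × ℕ))).disjUnion
      ({((0 : ℕ), (1 : ℕ))} : Finset (ℕ × ℕ)) hdisjG with hG
  have hGcard : G.card = l + 2 := by
    rw [hG, Finset.card_disjUnion, Finset.card_image_of_injective _
      (fun a b hab => congrArg Prod.fst hab), Finset.card_range, Finset.card_singleton]
  -- image equality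
  have hIm : Φ '' S = ↑G := by
    ext p
    constructor
    · rintro ⟨c, hc, rfl⟩
      obtain ⟨D, hD, hcard, rfl⟩ := hc
      rw [hval D hD]
      have hk_le : (Kset l D).card ≤ l := by
        simpa using Finset.card_le_card (Finset.subset_univ (Kset l D))
      rw [hG, Finset.coe_disjUnion, Set.mem_union]
      by_cases hbig : (Sum.inr ⊤ : HC l) ∈ D
      · right
        rw [if_pos hbig, K_zero_of_big hD hcard hbig hl]
        simp
      · left
        rw [if_neg hbig]
        simp only [Finset.coe_image, Set.mem_image, Finset.mem_coe, Finset.mem_range]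
        exact ⟨(Kset l D).card, by omega, rfl⟩
    · intro hp
      rw [hG, Finset.coe_disjUnion, Set.mem_union] at hp
      rcases hp with hp | hp
      · simp only [Finset.coe_image, Set.mem_image, Finset.mem_coe, Finset.mem_range] at hp
        obtain ⟨k, hkl, rfl⟩ := hp
        rcases Nat.eq_zero_or_pos k with rfl | hk1
        · obtain ⟨D, hD, hcard, hK, hbig⟩ := exists_downset_zero hl
          refine ⟨cls (subposet (Hposet l) D), ⟨D, hD, hcard, rfl⟩, ?_⟩
          rw [hval D hD, hK, if_neg hbig]
        · obtain ⟨D, hD, hcard, hK, hbig⟩ := exists_downset_k hl k hk1 (by omega)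
          refine ⟨cls (subposet (Hposet l) D), ⟨D, hD, hcard, rfl⟩, ?_⟩
          rw [hval D hD, hK, if_neg hbig]
      · simp only [Finset.coe_singleton, Set.mem_singleton_iff] at hp
        subst hp
        obtain ⟨D, hD, hcard, hK, hbig⟩ := exists_downset_star hl
        refine ⟨cls (subposet (Hposet l) D), ⟨D, hD, hcard, rfl⟩, ?_⟩
        rw [hval D hD, hK, if_pos hbig]
  -- conclude
  have h1 : S.ncard = (Φ '' S).ncard := (Set.ncard_image_of_injOn hInj).symm
  rw [h1, hIm, Set.ncard_coe_finset, hGcard]
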